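/- Δ-system combination step for independent families: let X ⊆ [ω]^ω be independent, and suppose x ≠ y are almost disjoint infinite sets, F_x, G_x, F_y, G_y are finite disjoint pairs of subsets of X with σ(F_x,G_x) ⊆* x and σ(F_y,G_y) ⊆* y, and (F_x ∪ G_x) ∩ (F_y ∪ G_y) = R with R ∩ F_x = R ∩ F_y and R ∩ G_x = R ∩ G_y. Then (F_x ∪ F_y) ∩ (G_x ∪ G_y) = ∅ and σ(F_x ∪ F_y, G_x ∪ G_y) is finite, contradicting the independence of X. Hence no such configuration exists. -/
import Mathlib


def AlmostSub (a b : Set ℕ) : Prop := (a \ b).Finite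

def sigmaFG (F G : Finset (Set ℕ)) : Set ℕ :=
  (⋂ a ∈ (F : Set (Set ℕ)), a) ∩ ⋂ b ∈ (G : Set (Set ℕ)), bᶜ

def IsIndependentFamily (X : Set (Set ℕ)) : Prop :=
  ∀ F G : Finset (Set ℕ), ↑F ⊆ X → ↑G ⊆ X → Disjoint F G → (sigmaFG F G).Infinite

open scoped Classical

/-- Δ-system combination step for independent families: no configuration as described can
exist (its existence would make `σ(F_x ∪ F_y, G_x ∪ G_y)` finite with
`(F_x ∪ F_y) ∩ (G_x ∪ G_y) = ∅`, contradicting independence). -/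
theorem delta_system_step (X : Set (Set ℕ)) (hX : IsIndependentFamily X)
    (x y : Set ℕ) (hxy : x ≠ y) (hx : x.Infinite) (hy : y.Infinite)
    (had : (x ∩ y).Finite)
    (Fx Gx Fy Gy R : Finset (Set ℕ))
    (hFx : ↑Fx ⊆ X) (hGx : ↑Gx ⊆ X) (hFy : ↑Fy ⊆ X) (hGy : ↑Gy ⊆ X)
    (hdx : Disjoint Fx Gx) (hdy : Disjoint Fy Gy)
    (hsx : AlmostSub (sigmaFG Fx Gx) x) (hsy : AlmostSub (sigmaFG Fy Gy) y)
    (hR : (Fx ∪ Gx) ∩ (Fy ∪ Gy) = R)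
    (hRF : R ∩ Fx = R ∩ Fy) (hRG : R ∩ Gx = R ∩ Gy) :
    False := by
  have hdisj : Disjoint (Fx ∪ Fy) (Gx ∪ Gy) := by
    rw [Finset.disjoint_left]
    intro a haF haG
    have hFx' := Finset.disjoint_left.mp hdx
    have hFy' := Finset.disjoint_left.mp hdy
    rcases Finset.mem_union.mp haF with hFa | hFa <;>
      rcases Finset.mem_union.mp haG with hGa | hGa
    · exact hFx' hFa hGa
    · have haR : a ∈ R := by
        rw [← hR]; exact Finset.mem_inter.mpr ⟨Finset.mem_union_left _ hFa,
          Finset.mem_union_right _ hGa⟩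
      have : a ∈ R ∩ Fy := hRF ▸ Finset.mem_inter.mpr ⟨haR, hFa⟩
      exact hFy' (Finset.mem_inter.mp this).2 hGa
    · have haR : a ∈ R := by
        rw [← hR]; exact Finset.mem_inter.mpr ⟨Finset.mem_union_right _ hGa,
          Finset.mem_union_left _ hFa⟩
      have : a ∈ R ∩ Gy := hRG ▸ Finset.mem_inter.mpr ⟨haR, hGa⟩
      exact hFy' hFa (Finset.mem_inter.mp this).2
    · exact hFy' hFa hGa
  have hsub : sigmaFG (Fx ∪ Fy) (Gx ∪ Gy) ⊆ sigmaFG Fx Gx ∩ sigmaFG Fy Gy := by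
    intro n hn
    obtain ⟨hn1, hn2⟩ := hn
    simp only [Set.mem_iInter] at hn1 hn2
    refine ⟨⟨?_, ?_⟩, ?_, ?_⟩ <;> simp only [Set.mem_iInter] <;> intro a ha
    · exact hn1 a (Finset.mem_union_left _ ha)
    · exact hn2 a (Finset.mem_union_left _ ha)
    · exact hn1 a (Finset.mem_union_right _ ha)
    · exact hn2 a (Finset.mem_union_right _ ha)
  have hfin : (sigmaFG (Fx ∪ Fy) (Gx ∪ Gy)).Finite := by
    apply Set.Finite.subset (((hsx.union hsy).union had))
    intro n hn
    obtain ⟨h1, h2⟩ := hsub hn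
    by_cases hnx : n ∈ x
    · by_cases hny : n ∈ y
      · exact Or.inr ⟨hnx, hny⟩
      · exact Or.inl (Or.inr ⟨h2, hny⟩)
    · exact Or.inl (Or.inl ⟨h1, hnx⟩)
  exact hX (Fx ∪ Fy) (Gx ∪ Gy)
    (by rw [Finset.coe_union]; exact Set.union_subset hFx hFy)
    (by rw [Finset.coe_union]; exact Set.union_subset hGx hGy) hdisj hfin
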